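/- Consider the signed network coordination game on a network (V, W) with external field h and a partition V = R ∪ S (R, S disjoint) such that both the subnetwork (R, W_{RR}) and the subnetwork (S, W_{SS}) are structurally balanced. If there exists τ ∈ {−1,+1}^R such that τ_i W_ij τ_j ≥ 0 for all i, j ∈ R and w_i^R + τ_i h_i ≥ w_i^S for every i ∈ R, then there exists a Nash equilibrium x* of the SNC game such that x*_i = τ_i for every i ∈ R. -/

import Mathlib

open Finset Function

noncomputable section

/-- The binary action set `A = {−1, +1}`, as a subtype of `ℝ`. -/
abbrev Act : Type := {r : ℝ // r = 1 ∨ r = -1}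

def onePt : Act := ⟨1, Or.inl rfl⟩

def negOnePt : Act := ⟨-1, Or.inr rfl⟩

def actMul (a b : Act) : Act :=
  ⟨(a : ℝ) * (b : ℝ), by rcases a.2 with h1 | h1 <;> rcases b.2 with h2 | h2 <;> norm_num [h1, h2]⟩

def actNeg (a : Act) : Act :=
  ⟨-(a : ℝ), by rcases a.2 with h1 | h1 <;> norm_num [h1]⟩

/-- Utility of player `i` in the SNC game on the network `(V, W)` with external field `h`. -/
def utility {V : Type*} [Fintype V] (W : V → V → ℝ) (h : V → ℝ) (i : V) (x : V → Act) : ℝ :=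
  h i * (x i : ℝ) + (x i : ℝ) * ∑ j, W i j * (x j : ℝ)

/-- Best response set of player `i` (depends only on `x_{−i}`). -/
def bestResponse {V : Type*} [Fintype V] [DecidableEq V] (W : V → V → ℝ) (h : V → ℝ)
    (i : V) (x : V → Act) : Set Act :=
  {a | ∀ b : Act, utility W h i (Function.update x i b) ≤ utility W h i (Function.update x i a)}

/-- Nash equilibrium of the SNC game. -/
def IsNash {V : Type*} [Fintype V] [DecidableEq V] (W : V → V → ℝ) (h : V → ℝ)
    (x : V → Act) : Prop :=
  ∀ i, x i ∈ bestResponse W h i x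

/-- One step of a best-response path. -/
def BRStep {V : Type*} [Fintype V] [DecidableEq V] (W : V → V → ℝ) (h : V → ℝ)
    (x y : V → Act) : Prop :=
  ∃ i, (∀ j, j ≠ i → y j = x j) ∧ y i ≠ x i ∧ y i ∈ bestResponse W h i x

def GloballyBRReachable {V : Type*} [Fintype V] [DecidableEq V] (W : V → V → ℝ) (h : V → ℝ)
    (X : Set (V → Act)) : Prop :=
  ∀ x : V → Act, ∃ y ∈ X, Relation.ReflTransGen (BRStep W h) x y

def BRInvariant {V : Type*} [Fintype V] [DecidableEq V] (W : V → V → ℝ) (h : V → ℝ)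
    (X : Set (V → Act)) : Prop :=
  ∀ x ∈ X, ∀ y, Relation.ReflTransGen (BRStep W h) x y → y ∈ X

def GloballyBRStable {V : Type*} [Fintype V] [DecidableEq V] (W : V → V → ℝ) (h : V → ℝ)
    (X : Set (V → Act)) : Prop :=
  GloballyBRReachable W h X ∧ BRInvariant W h X

/-- Structural balance of a signed weight matrix. -/
def StructurallyBalanced {V : Type*} (W : V → V → ℝ) : Prop :=
  ∃ P : Set V, (∀ i j, (i ∈ P ↔ j ∈ P) → 0 ≤ W i j) ∧ (∀ i j, ¬(i ∈ P ↔ j ∈ P) → W i j ≤ 0)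

/-- `(h^−, h^+)`-indecomposability of a network. -/
def Indecomposable {V : Type*} [Fintype V] [DecidableEq V] (W : V → V → ℝ)
    (hm hp : V → ℝ) : Prop :=
  ∀ P M : Finset V, P ∪ M = Finset.univ → Disjoint P M → P.Nonempty → M.Nonempty →
    (∃ i ∈ P, ∑ j ∈ P, |W i j| + hp i < ∑ j ∈ M, |W i j|) ∨
    (∃ i ∈ M, (∑ j ∈ M, |W i j|) - hm i < ∑ j ∈ P, |W i j|)


lemma act_abs (a : Act) : |(a : ℝ)| = 1 := by
  rcases a.2 with h | h <;> simp [h]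

lemma br_of_nonneg {V : Type*} [Fintype V] [DecidableEq V] (W : V → V → ℝ) (h : V → ℝ)
    (hdiag : ∀ i, W i i = 0) (i : V) (x : V → Act)
    (hx : 0 ≤ (x i : ℝ) * (h i + ∑ j, W i j * (x j : ℝ))) :
    x i ∈ bestResponse W h i x := by
  intro b
  have key : ∀ a : Act, utility W h i (Function.update x i a)
      = (h i + ∑ j, W i j * ((x j : ℝ))) * (a : ℝ) := by
    intro a
    unfold utility
    rw [Function.update_self]
    have hs : ∑ j, W i j * ((Function.update x i a j : Act) : ℝ)
        = ∑ j, W i j * (x j : ℝ) := by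
      apply Finset.sum_congr rfl
      intro j _
      by_cases hj : j = i
      · subst hj; simp [hdiag j]
      · rw [Function.update_of_ne hj]
    rw [hs]; ring
  rw [key b, key (x i)]
  set c := h i + ∑ j, W i j * (x j : ℝ) with hc
  have hx' : 0 ≤ c * (x i : ℝ) := by rw [mul_comm]; exact hx
  have h1 : c * (x i : ℝ) = |c| := by
    rw [← abs_of_nonneg hx', abs_mul, act_abs, mul_one]
  calc c * (b : ℝ) ≤ |c * (b : ℝ)| := le_abs_self _
    _ = |c| := by rw [abs_mul, act_abs, mul_one]
    _ = c * ((x i : Act) : ℝ) := h1.symm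

lemma mul_sum_reassoc {V : Type*} (T : Finset V) (p q r : ℝ) (f g : V → ℝ) :
    (p * q) * (r + ∑ j ∈ T, f j * g j) = q * (p * r + ∑ j ∈ T, (p * f j) * g j) := by
  rw [mul_add, mul_add, Finset.mul_sum, Finset.mul_sum]
  congr 1
  · ring
  · exact Finset.sum_congr rfl fun j _ => by ring

lemma exists_signs {V : Type*} [Fintype V] [DecidableEq V]
    (c : V → V → ℝ) (d : V → ℝ) (S : Finset V)
    (hc : ∀ i ∈ S, ∀ j ∈ S, 0 ≤ c i j) :
    ∃ y : V → ℝ, (∀ i, y i = 1 ∨ y i = -1) ∧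
      ∀ i ∈ S, 0 ≤ y i * (d i + ∑ j ∈ S, c i j * y j) := by
  classical
  have hmono : Monotone (fun A : Set V =>
      {i : V | i ∈ S ∧ 0 ≤ d i + ∑ j ∈ S, c i j * (if j ∈ A then (1:ℝ) else -1)}) := by
    intro A B hAB i hi
    obtain ⟨hiS, hti⟩ := hi
    refine ⟨hiS, le_trans hti (add_le_add_right (Finset.sum_le_sum fun j hj => ?_) _)⟩
    have hcij := hc i hiS j hj
    by_cases hjA : j ∈ A
    · simp [hjA, hAB hjA]
    · by_cases hjB : j ∈ B
      · simp only [if_neg hjA, if_pos hjB]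
        linarith
      · simp [hjA, hjB]
  let F : Set V →o Set V :=
    ⟨fun A => {i : V | i ∈ S ∧ 0 ≤ d i + ∑ j ∈ S, c i j * (if j ∈ A then (1:ℝ) else -1)}, hmono⟩
  obtain ⟨A, hfix⟩ : ∃ A : Set V, F A = A := ⟨OrderHom.lfp F, OrderHom.map_lfp F⟩
  have hfix' : ∀ i : V, i ∈ A ↔
      (i ∈ S ∧ 0 ≤ d i + ∑ j ∈ S, c i j * (if j ∈ A then (1:ℝ) else -1)) := by
    intro i
    conv_lhs => rw [← hfix]
    exact Iff.rfl
  refine ⟨fun i => if i ∈ A then 1 else -1, fun i => ?_, fun i hiS => ?_⟩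
  · by_cases h : i ∈ A <;> simp [h]
  · show 0 ≤ (if i ∈ A then (1:ℝ) else -1)
      * (d i + ∑ j ∈ S, c i j * (if j ∈ A then (1:ℝ) else -1))
    by_cases hiA : i ∈ A
    · rw [if_pos hiA, one_mul]
      exact ((hfix' i).mp hiA).2
    · rw [if_neg hiA]
      have ht : d i + ∑ j ∈ S, c i j * (if j ∈ A then (1:ℝ) else -1) < 0 := by
        by_contra hcon
        exact hiA ((hfix' i).mpr ⟨hiS, le_of_not_gt hcon⟩)
      linarith

theorem stmt10 {V : Type*} [Fintype V] [DecidableEq V] [Nonempty V]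
    (W : V → V → ℝ) (h : V → ℝ) (hdiag : ∀ i, W i i = 0)
    (R S : Finset V) (hUnion : R ∪ S = Finset.univ) (hDisj : Disjoint R S)
    (hsbR : StructurallyBalanced (fun i j : {i // i ∈ R} => W i.1 j.1))
    (hsbS : StructurallyBalanced (fun i j : {i // i ∈ S} => W i.1 j.1))
    (τ : {i // i ∈ R} → Act)
    (hτ : ∀ i j : {i // i ∈ R}, 0 ≤ (τ i : ℝ) * W i.1 j.1 * (τ j : ℝ))
    (hcoh : ∀ i : {i // i ∈ R},
      ∑ j ∈ S, |W i.1 j| ≤ (∑ j ∈ R, |W i.1 j|) + (τ i : ℝ) * h i.1) :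
    ∃ x : V → Act, IsNash W h x ∧ ∀ i : {i // i ∈ R}, x i.1 = τ i := by
  classical
  obtain ⟨σ, hσpm, hcnn⟩ : ∃ σ : V → ℝ, (∀ i, σ i = 1 ∨ σ i = -1) ∧
      (∀ i ∈ S, ∀ j ∈ S, 0 ≤ σ i * (W i j * σ j)) := by
    obtain ⟨Ps, hPs1, hPs2⟩ := hsbS
    refine ⟨fun i => if h : i ∈ S then (if (⟨i, h⟩ : {i // i ∈ S}) ∈ Ps then 1 else -1) else 1,
      ?_, ?_⟩
    · intro i
      by_cases h : i ∈ S
      · by_cases h2 : (⟨i, h⟩ : {i // i ∈ S}) ∈ Ps <;> simp [h, h2]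
      · simp [h]
    · intro i hi j hj
      simp only [dif_pos hi, dif_pos hj]
      by_cases h1 : (⟨i, hi⟩ : {i // i ∈ S}) ∈ Ps <;>
        by_cases h2 : (⟨j, hj⟩ : {i // i ∈ S}) ∈ Ps
      · have hw : 0 ≤ W i j := hPs1 ⟨i, hi⟩ ⟨j, hj⟩ (iff_of_true h1 h2)
        rw [if_pos h1, if_pos h2]; nlinarith
      · have hw : W i j ≤ 0 := hPs2 ⟨i, hi⟩ ⟨j, hj⟩ (fun hiff => h2 (hiff.mp h1))
        rw [if_pos h1, if_neg h2]; nlinarith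
      · have hw : W i j ≤ 0 := hPs2 ⟨i, hi⟩ ⟨j, hj⟩ (fun hiff => h1 (hiff.mpr h2))
        rw [if_neg h1, if_pos h2]; nlinarith
      · have hw : 0 ≤ W i j := hPs1 ⟨i, hi⟩ ⟨j, hj⟩ (iff_of_false h1 h2)
        rw [if_neg h1, if_neg h2]; nlinarith
  obtain ⟨g, hg⟩ : ∃ g : V → ℝ, ∀ (j : V) (hj : j ∈ R), g j = (τ ⟨j, hj⟩ : ℝ) :=
    ⟨fun j => if hj : j ∈ R then (τ ⟨j, hj⟩ : ℝ) else 1, fun j hj => dif_pos hj⟩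
  obtain ⟨y, hypm, hy⟩ := exists_signs (fun i j => σ i * (W i j * σ j))
    (fun i => σ i * (h i + ∑ j ∈ R, W i j * g j)) S hcnn
  obtain ⟨x, hx1, hx2⟩ : ∃ x : V → Act, (∀ (j : V) (hj : j ∈ R), x j = τ ⟨j, hj⟩) ∧
      (∀ j : V, j ∉ R → ((x j : Act) : ℝ) = σ j * y j) := by
    refine ⟨fun j => if hj : j ∈ R then τ ⟨j, hj⟩ else
      ⟨σ j * y j, by rcases hσpm j with h1 | h1 <;> rcases hypm j with h2 | h2 <;>
        rw [h1, h2] <;> norm_num⟩, fun j hj => dif_pos hj, fun j hj => congrArg Subtype.val (dif_neg hj)⟩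
  refine ⟨x, ?_, fun i => hx1 i.1 i.2⟩
  intro i
  apply br_of_nonneg W h hdiag i x
  have hsplit : (∑ j, W i j * ((x j : ℝ)))
      = (∑ j ∈ R, W i j * (x j : ℝ)) + ∑ j ∈ S, W i j * (x j : ℝ) := by
    rw [← Finset.sum_union hDisj, hUnion]
  rw [hsplit]
  by_cases hiR : i ∈ R
  · have hxi : ((x i : Act) : ℝ) = (τ ⟨i, hiR⟩ : ℝ) := by rw [hx1 i hiR]
    have hA : ∑ j ∈ R, (τ ⟨i, hiR⟩ : ℝ) * (W i j * (x j : ℝ)) = ∑ j ∈ R, |W i j| := by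
      refine Finset.sum_congr rfl fun j hj => ?_
      rw [hx1 j hj]
      have h0 : 0 ≤ (τ ⟨i, hiR⟩ : ℝ) * W i j * (τ ⟨j, hj⟩ : ℝ) := hτ ⟨i, hiR⟩ ⟨j, hj⟩
      rw [show (τ ⟨i, hiR⟩ : ℝ) * (W i j * (τ ⟨j, hj⟩ : ℝ))
          = (τ ⟨i, hiR⟩ : ℝ) * W i j * (τ ⟨j, hj⟩ : ℝ) by ring,
        ← abs_of_nonneg h0, abs_mul, abs_mul, act_abs, act_abs, one_mul, mul_one]
    have hB : |∑ j ∈ S, (τ ⟨i, hiR⟩ : ℝ) * (W i j * (x j : ℝ))| ≤ ∑ j ∈ S, |W i j| := by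
      refine (Finset.abs_sum_le_sum_abs _ _).trans
        (le_of_eq (Finset.sum_congr rfl fun j hj => ?_))
      rw [abs_mul, abs_mul, act_abs, act_abs, one_mul, mul_one]
    have key : ((x i : Act) : ℝ)
        * (h i + ((∑ j ∈ R, W i j * (x j : ℝ)) + ∑ j ∈ S, W i j * (x j : ℝ)))
        = (τ ⟨i, hiR⟩ : ℝ) * h i + (∑ j ∈ R, (τ ⟨i, hiR⟩ : ℝ) * (W i j * (x j : ℝ)))
          + ∑ j ∈ S, (τ ⟨i, hiR⟩ : ℝ) * (W i j * (x j : ℝ)) := by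
      rw [hxi, mul_add, mul_add, Finset.mul_sum, Finset.mul_sum, ← add_assoc]
    rw [key, hA]
    have hcoh' := hcoh ⟨i, hiR⟩
    have hB' := neg_abs_le (∑ j ∈ S, (τ ⟨i, hiR⟩ : ℝ) * (W i j * (x j : ℝ)))
    linarith
  · have hiS : i ∈ S := by
      have hmem : i ∈ R ∪ S := by rw [hUnion]; exact Finset.mem_univ i
      exact (Finset.mem_union.mp hmem).resolve_left hiR
    have hxi : ((x i : Act) : ℝ) = σ i * y i := hx2 i hiR
    have hsumR : ∑ j ∈ R, W i j * ((x j : ℝ)) = ∑ j ∈ R, W i j * g j := by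
      refine Finset.sum_congr rfl fun j hj => ?_
      rw [hx1 j hj, hg j hj]
    have hsumS : ∑ j ∈ S, W i j * ((x j : ℝ)) = ∑ j ∈ S, (W i j * σ j) * y j := by
      refine Finset.sum_congr rfl fun j hj => ?_
      have hjR : j ∉ R := Finset.disjoint_right.mp hDisj hj
      rw [hx2 j hjR]; ring
    rw [hxi, hsumR, hsumS, ← add_assoc, mul_sum_reassoc]
    exact hy i hiS
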